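/- arXiv:1903.06804 — 3 statements merged into one kernel-verified Lean document; each statement's English description precedes it below -/
import Mathlib

section
/- For any norm ‖·‖ on ℝⁿ, any λ ≥ 0, vectors ζ̂, b ∈ ℝⁿ and scalar a ∈ ℝ, the value sup_{ζ ∈ ℝⁿ} ( a·⟨ζ, b⟩ − λ‖ζ − ζ̂‖ ) equals a·⟨ζ̂, b⟩ if |a|·‖b‖_* ≤ λ, and equals +∞ otherwise. -/
open scoped BigOperators

/-- The dual norm `‖θ‖_* = sup_{‖y‖ ≤ 1} ⟨θ, y⟩` of a norm `N`. -/
noncomputable def dualNorm {n : ℕ} (N : (Fin n → ℝ) → ℝ) (θ : Fin n → ℝ) : ℝ :=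
  sSup {r : ℝ | ∃ y : Fin n → ℝ, N y ≤ 1 ∧ r = ∑ i, θ i * y i}

def NormCopy (n : ℕ) : Type := Fin n → ℝ

theorem dual_bound {n : ℕ} (N : (Fin n → ℝ) → ℝ)
    (hNeq : ∀ x, N x = 0 ↔ x = 0)
    (hNsmul : ∀ (c : ℝ) (x : Fin n → ℝ), N (c • x) = |c| * N x)
    (hNadd : ∀ x y, N (x + y) ≤ N x + N y)
    (b : Fin n → ℝ) :
    ∃ C, 0 ≤ C ∧ ∀ y, |∑ i, b i * y i| ≤ C * N y := by
  letI : AddCommGroup (NormCopy n) := Pi.addCommGroup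
  letI : Module ℝ (NormCopy n) := Pi.module _ _ _
  letI : FiniteDimensional ℝ (NormCopy n) :=
    inferInstanceAs (FiniteDimensional ℝ (Fin n → ℝ))
  letI : NormedAddCommGroup (NormCopy n) := AddGroupNorm.toNormedAddCommGroup
    { toFun := N
      map_zero' := (hNeq 0).mpr rfl
      add_le' := hNadd
      neg' := fun x => by
        calc N (-x) = N ((-1:ℝ) • (x : Fin n → ℝ)) :=
              congrArg N (funext fun i => show -(x i) = -1 * x i by ring)
          _ = N x := (hNsmul (-1) x).trans (by simp)
      eq_zero_of_map_eq_zero' := fun x h => (hNeq x).mp h }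
  letI : NormedSpace ℝ (NormCopy n) := ⟨fun c x => by
    show N (c • x) ≤ |c| * N x
    exact le_of_eq (hNsmul c x)⟩
  let f : (NormCopy n) →ₗ[ℝ] ℝ :=
    { toFun := fun y => ∑ i, b i * y i
      map_add' := fun x y => by
        show (∑ i, b i * (x i + y i)) = _
        simp [mul_add, Finset.sum_add_distrib]
      map_smul' := fun c x => by
        show (∑ i, b i * (c * x i)) = c * ∑ i, b i * x i
        rw [Finset.mul_sum]; congr 1; ext i; ring }
  let g := LinearMap.toContinuousLinearMap f
  refine ⟨‖g‖, norm_nonneg g, fun y => ?_⟩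
  have := g.le_opNorm y
  exact this

/-- Scalar robust-regularization identity: for any norm `N` on `ℝⁿ`, `λ ≥ 0`,
`ζ̂, b ∈ ℝⁿ` and `a ∈ ℝ`, the value `sup_ζ (a⟨ζ,b⟩ − λ‖ζ − ζ̂‖)` equals `a⟨ζ̂,b⟩`
if `|a|·‖b‖_* ≤ λ`, and `+∞` otherwise. -/
theorem scalar_robust_regularization (n : ℕ) (N : (Fin n → ℝ) → ℝ)
    (hN0 : ∀ x, 0 ≤ N x) (hNeq : ∀ x, N x = 0 ↔ x = 0)
    (hNsmul : ∀ (c : ℝ) (x : Fin n → ℝ), N (c • x) = |c| * N x)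
    (hNadd : ∀ x y, N (x + y) ≤ N x + N y)
    (lam : ℝ) (hlam : 0 ≤ lam) (zhat b : Fin n → ℝ) (a : ℝ) :
    (⨆ z : Fin n → ℝ, ((a * (∑ i, z i * b i) - lam * N (z - zhat) : ℝ) : EReal))
      = if |a| * dualNorm N b ≤ lam
        then ((a * ∑ i, zhat i * b i : ℝ) : EReal) else ⊤ := by
  obtain ⟨C, hC0, hC⟩ := dual_bound N hNeq hNsmul hNadd b
  let S : Set ℝ := {r : ℝ | ∃ y : Fin n → ℝ, N y ≤ 1 ∧ r = ∑ i, b i * y i}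
  have hN00 : N 0 = 0 := (hNeq 0).mpr rfl
  have hSne : S.Nonempty := ⟨0, 0, by simp [hN00]⟩
  have hSbdd : BddAbove S := by
    refine ⟨C, fun r hr => ?_⟩
    obtain ⟨y, hy1, hy2⟩ := hr
    calc r ≤ |∑ i, b i * y i| := hy2 ▸ le_abs_self _
      _ ≤ C * N y := hC y
      _ ≤ C * 1 := mul_le_mul_of_nonneg_left hy1 hC0
      _ = C := mul_one C
  have hD : dualNorm N b = sSup S := rfl
  -- the sign of a
  set s : ℝ := if 0 ≤ a then 1 else -1 with hs_def
  have hs : |s| = 1 := by by_cases h : 0 ≤ a <;> simp [hs_def, h]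
  have hsa : |a| * s = a := by
    by_cases h : 0 ≤ a
    · simp [hs_def, h, abs_of_nonneg h]
    · simp [hs_def, h, abs_of_neg (not_le.mp h)]
  have key : ∀ w : Fin n → ℝ,
      a * ∑ i, w i * b i ≤ |a| * dualNorm N b * N w := by
    intro w
    by_cases hw : N w = 0
    · have hw0 : w = 0 := (hNeq w).mp hw
      simp [hw0, hN00]
    · have hw' : 0 < N w := lt_of_le_of_ne (hN0 w) (Ne.symm hw)
      set y : Fin n → ℝ := (N w)⁻¹ • (s • w) with hy_def
      have hNy : N y = 1 := by
        rw [hy_def, hNsmul, hNsmul, hs, one_mul,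
          abs_of_nonneg (inv_nonneg.mpr hw'.le), inv_mul_cancel₀ hw]
      have hmem : (∑ i, b i * y i) ∈ S := ⟨y, hNy.le, rfl⟩
      have hle : (∑ i, b i * y i) ≤ sSup S := le_csSup hSbdd hmem
      have hsum : (∑ i, b i * y i) = (N w)⁻¹ * s * ∑ i, w i * b i := by
        rw [Finset.mul_sum]
        refine Finset.sum_congr rfl fun i _ => ?_
        simp [hy_def]; ring
      have h0 : (∑ i, b i * y i) * N w = s * ∑ i, w i * b i := by
        rw [hsum]; field_simp
      have h1 : s * (∑ i, w i * b i) ≤ sSup S * N w := by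
        rw [← h0]; exact mul_le_mul_of_nonneg_right hle hw'.le
      have h2 : a * ∑ i, w i * b i ≤ |a| * (sSup S * N w) := by
        calc a * ∑ i, w i * b i = |a| * s * ∑ i, w i * b i := by rw [hsa]
          _ = |a| * (s * ∑ i, w i * b i) := by ring
          _ ≤ |a| * (sSup S * N w) := mul_le_mul_of_nonneg_left h1 (abs_nonneg a)
      rw [hD]; linarith [h2]
  split_ifs with h
  · apply le_antisymm
    · refine iSup_le fun z => ?_
      have hkey := key (z - zhat)
      have hsum : (∑ i, (z - zhat) i * b i)
          = (∑ i, z i * b i) - ∑ i, zhat i * b i := by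
        simp [sub_mul, Finset.sum_sub_distrib]
      rw [hsum] at hkey
      have hN' : |a| * dualNorm N b * N (z - zhat) ≤ lam * N (z - zhat) :=
        mul_le_mul_of_nonneg_right h (hN0 _)
      have hfin : a * (∑ i, z i * b i) - lam * N (z - zhat)
          ≤ a * ∑ i, zhat i * b i := by
        rw [mul_sub] at hkey; linarith
      exact_mod_cast EReal.coe_le_coe_iff.mpr hfin
    · have hz := le_iSup
        (fun z : Fin n → ℝ =>
          ((a * (∑ i, z i * b i) - lam * N (z - zhat) : ℝ) : EReal)) zhat
      simpa [sub_self, hN00] using hz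
  · push_neg at h
    have ha : a ≠ 0 := by
      rintro rfl; simp at h; linarith
    have ha' : 0 < |a| := abs_pos.mpr ha
    have hlt : lam / |a| < sSup S := by
      rw [div_lt_iff₀ ha', mul_comm]; rwa [hD] at h
    obtain ⟨r, ⟨y, hy1, hy2⟩, hr⟩ := exists_lt_of_lt_csSup hSne hlt
    rw [div_lt_iff₀ ha'] at hr
    have hεpos : 0 < |a| * r - lam := by nlinarith
    rw [iSup_eq_top]
    intro M hM
    induction M using EReal.rec with
    | bot => exact ⟨zhat, EReal.bot_lt_coe _⟩
    | top => exact absurd hM (lt_irrefl ⊤)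
    | coe m =>
      set c : ℝ := a * ∑ i, zhat i * b i with hc_def
      set t : ℝ := (max 0 (m - c) + 1) / (|a| * r - lam) with ht_def
      have ht : 0 < t := div_pos (by positivity) hεpos
      refine ⟨zhat + (t * s) • y, ?_⟩
      have hsum : (∑ i, (zhat + (t * s) • y) i * b i)
          = (∑ i, zhat i * b i) + t * s * ∑ i, b i * y i := by
        rw [Finset.mul_sum, ← Finset.sum_add_distrib]
        refine Finset.sum_congr rfl fun i _ => ?_
        simp; ring
      have hNz : N ((zhat + (t * s) • y) - zhat) = t * N y := by
        rw [add_sub_cancel_left, hNsmul, abs_mul, hs, mul_one,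
          abs_of_pos ht]
      have hval : a * (∑ i, (zhat + (t * s) • y) i * b i)
          - lam * N ((zhat + (t * s) • y) - zhat)
          = c + t * (|a| * r) - lam * (t * N y) := by
        have has2 : a * s = |a| := by
          by_cases hpos : 0 ≤ a
          · simp [hs_def, hpos, abs_of_nonneg hpos]
          · simp [hs_def, hpos, abs_of_neg (not_le.mp hpos)]
        rw [hsum, hNz, ← hy2, hc_def, mul_add]
        linear_combination (t * r) * has2
      have hge : c + t * (|a| * r) - lam * (t * N y)
          ≥ c + t * (|a| * r - lam) := by
        have : lam * (t * N y) ≤ lam * t := by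
          apply mul_le_mul_of_nonneg_left _ hlam
          nlinarith
        linarith
      have htε : t * (|a| * r - lam) = max 0 (m - c) + 1 := by
        rw [ht_def]; field_simp
      have hmlt : m < c + t * (|a| * r - lam) := by
        rw [htε]
        have := le_max_right (0:ℝ) (m - c)
        linarith
      rw [EReal.coe_lt_coe_iff, hval]
      linarith
end

section
/- Let L : ℝʳ → ℝ be convex and continuous with bounded conjugate domain Θ = {θ : L*(θ) < ∞}, let ‖·‖ be a norm on ℝ^q with dual norm ‖·‖_*, let λ > 0, b ∈ ℝ^q, and ζ̂₁,…,ζ̂ᵣ ∈ ℝ^q. Then sup over ζ₁,…,ζᵣ ∈ ℝ^q of L(⟨ζ₁,b⟩,…,⟨ζᵣ,b⟩) − λ·Σⱼ‖ζⱼ − ζ̂ⱼ‖ equals L(⟨ζ̂₁,b⟩,…,⟨ζ̂ᵣ,b⟩) if sup_{θ ∈ Θ} ‖θ‖_∞ · ‖b‖_* ≤ λ, and equals +∞ otherwise. -/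
open scoped BigOperators

/-- The convex conjugate `L*(θ) = sup_s ⟨θ,s⟩ - L(s)`. -/
noncomputable def fenchelConj {n : ℕ} (L : (Fin n → ℝ) → ℝ) (θ : Fin n → ℝ) : EReal :=
  ⨆ s : Fin n → ℝ, (((∑ j, θ j * s j) - L s : ℝ) : EReal)

/-- Existence of a subgradient for a convex continuous function on ℝⁿ. -/
theorem exists_subgradient {n : ℕ} (L : (Fin n → ℝ) → ℝ)
    (hLconv : ConvexOn ℝ Set.univ L) (hLcont : Continuous L) (x₀ : Fin n → ℝ) :
    ∃ θ : Fin n → ℝ, ∀ s, L x₀ + ∑ j, θ j * (s j - x₀ j) ≤ L s := by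
  classical
  set S : Set ((Fin n → ℝ) × ℝ) := {p | L p.1 < p.2} with hS
  have hSconv : Convex ℝ S := by
    intro p hp q hq a b ha hb hab
    simp only [hS, Set.mem_setOf_eq] at hp hq ⊢
    have h1 : L (a • p.1 + b • q.1) ≤ a * L p.1 + b * L q.1 := by
      have := hLconv.2 (Set.mem_univ p.1) (Set.mem_univ q.1) ha hb hab
      simpa using this
    have h2 : a * L p.1 + b * L q.1 < a * p.2 + b * q.2 := by
      rcases eq_or_lt_of_le ha with ha' | ha'
      · rcases eq_or_lt_of_le hb with hb' | hb'
        · exfalso; rw [← ha', ← hb'] at hab; simpa using hab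
        · have : a * L p.1 = a * p.2 := by rw [← ha']; ring
          have h3 : b * L q.1 < b * q.2 := by exact (mul_lt_mul_iff_right₀ hb').2 hq
          linarith
      · have h3 : a * L p.1 < a * p.2 := (mul_lt_mul_iff_right₀ ha').2 hp
        have h4 : b * L q.1 ≤ b * q.2 := mul_le_mul_of_nonneg_left hq.le hb
        linarith
    calc L ((a • p + b • q).1) = L (a • p.1 + b • q.1) := rfl
      _ ≤ a * L p.1 + b * L q.1 := h1
      _ < a * p.2 + b * q.2 := h2
      _ = (a • p + b • q).2 := rfl
  have hSopen : IsOpen S := isOpen_lt (hLcont.comp continuous_fst) continuous_snd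
  have hdisj : Disjoint S {((x₀, L x₀) : (Fin n → ℝ) × ℝ)} := by
    rw [Set.disjoint_singleton_right]
    simp [hS]
  obtain ⟨f, u, hfu, hfu'⟩ := geometric_hahn_banach_open hSconv hSopen
    (convex_singleton _) hdisj
  have hu : u ≤ f (x₀, L x₀) := hfu' _ rfl
  set c : ℝ := f (0, 1) with hc
  have hsplit : ∀ (x : Fin n → ℝ) (t : ℝ), f (x, t) = f (x, 0) + t * c := by
    intro x t
    have : (x, t) = (x, (0:ℝ)) + t • ((0 : Fin n → ℝ), (1:ℝ)) := by
      simp [Prod.ext_iff]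
    rw [this, map_add, map_smul]
    simp [hc, smul_eq_mul]
  have hcneg : c < 0 := by
    have h1 : f (x₀, L x₀ + 1) < u := hfu _ (by simp [hS])
    rw [hsplit] at h1 hu
    linarith
  have hkey : ∀ s : Fin n → ℝ, f (s, 0) + c * L s ≤ u := by
    intro s
    have h1 : ∀ ε : ℝ, 0 < ε → f (s, 0) + c * (L s + ε) < u := by
      intro ε hε
      have := hfu (s, L s + ε) (by simp [hS, hε])
      rw [hsplit] at this; linarith
    have h2 : ∀ ε : ℝ, 0 < ε → f (s, 0) + c * L s < u - c * ε := by
      intro ε hε; have := h1 ε hε; nlinarith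
    by_contra hcon
    push_neg at hcon
    have hε : 0 < (f (s, 0) + c * L s - u) / (-c) := by
      apply div_pos (by linarith) (by linarith)
    have hcne : c ≠ 0 := ne_of_lt hcneg
    have heq : c * ((f (s, 0) + c * L s - u) / (-c)) = -(f (s, 0) + c * L s - u) := by
      have e1 : (f (s, 0) + c * L s - u) / (-c) * (-c) = (f (s, 0) + c * L s - u) :=
        div_mul_cancel₀ _ (neg_ne_zero.mpr hcne)
      linear_combination (-1 : ℝ) * e1
    linarith [h2 _ hε, heq]
  refine ⟨fun j => -(f ((fun k => if j = k then (1:ℝ) else 0), 0)) / c, ?_⟩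
  intro s
  have hlin : ∀ v : Fin n → ℝ, f (v, 0) = ∑ j, v j * f ((fun k => if j = k then (1:ℝ) else 0), 0) := by
    intro v
    have hv := pi_eq_sum_univ v
    have : ((v, (0:ℝ)) : (Fin n → ℝ) × ℝ)
        = ∑ j, v j • (((fun k => if j = k then (1:ℝ) else 0) : Fin n → ℝ), (0:ℝ)) := by
      rw [Prod.ext_iff]
      constructor
      · rw [Prod.fst_sum]; simpa using hv
      · rw [Prod.snd_sum]; simp
    rw [this, map_sum]
    apply Finset.sum_congr rfl
    intro j _
    have h := map_smul f (v j) (((fun k => if j = k then (1:ℝ) else 0) : Fin n → ℝ), (0:ℝ))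
    simp only [Prod.smul_mk, smul_zero, smul_eq_mul] at h
    exact h
  have h1 : f (s, 0) + c * L s ≤ u := hkey s
  have h2 : u ≤ f (x₀, 0) + c * L x₀ := by
    have := hu; rw [hsplit] at this; linarith [this]
  -- c (L s - L x₀) ≥ f(x₀,0) - f(s,0) reversed…
  have h3 : f (s, 0) - f (x₀, 0) ≤ c * L x₀ - c * L s := by linarith
  have h4 : L x₀ - L s ≤ (f (s,0) - f (x₀,0)) / c := by
    rw [le_div_iff_of_neg hcneg]; nlinarith
  have h5 : ∑ j, (-(f ((fun k => if j = k then (1:ℝ) else 0), 0)) / c) * (s j - x₀ j)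
      = (f (x₀, 0) - f (s, 0)) / c := by
    have hcne : c ≠ 0 := ne_of_lt hcneg
    rw [hlin x₀, hlin s, ← Finset.sum_sub_distrib, Finset.sum_div]
    apply Finset.sum_congr rfl
    intro j _
    field_simp
    ring
  rw [h5]
  have : (f (x₀,0) - f (s,0)) / c = -((f (s,0) - f (x₀,0)) / c) := by ring
  rw [this]
  linarith
theorem subgrad_mem_dom {n : ℕ} (L : (Fin n → ℝ) → ℝ) (θ x₀ : Fin n → ℝ)
    (h : ∀ s, L x₀ + ∑ j, θ j * (s j - x₀ j) ≤ L s) : fenchelConj L θ < ⊤ := by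
  have hb : fenchelConj L θ ≤ (((∑ j, θ j * x₀ j) - L x₀ : ℝ) : EReal) := by
    apply iSup_le
    intro s
    rw [EReal.coe_le_coe_iff]
    have h1 := h s
    have h2 : ∑ j, θ j * (s j - x₀ j) = ∑ j, θ j * s j - ∑ j, θ j * x₀ j := by
      rw [← Finset.sum_sub_distrib]
      exact Finset.sum_congr rfl fun j _ => by ring
    rw [h2] at h1
    linarith
  exact lt_of_le_of_lt hb (EReal.coe_lt_top _)

theorem dom_bound {n : ℕ} (L : (Fin n → ℝ) → ℝ) (θ : Fin n → ℝ)
    (h : fenchelConj L θ < ⊤) : ∃ M : ℝ, ∀ s, ∑ j, θ j * s j - L s ≤ M := by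
  obtain ⟨M, hM, _⟩ := EReal.exists_between_coe_real h
  refine ⟨M, fun s => ?_⟩
  rw [← EReal.coe_le_coe_iff]
  exact le_trans (le_iSup (fun s : Fin n → ℝ => (((∑ j, θ j * s j) - L s : ℝ) : EReal)) s) hM.le

section NormLemmas
variable {q : ℕ} (N : (Fin q → ℝ) → ℝ)
  (hN0 : ∀ x, 0 ≤ N x) (hNeq : ∀ x, N x = 0 ↔ x = 0)
  (hNsmul : ∀ (c : ℝ) (x : Fin q → ℝ), N (c • x) = |c| * N x)
  (hNadd : ∀ x y, N (x + y) ≤ N x + N y)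

include hN0 hNeq hNsmul hNadd

theorem norm_comparison : ∃ c : ℝ, 0 < c ∧ ∀ y, c * ‖y‖ ≤ N y := by
  classical
  have hNzero : N 0 = 0 := (hNeq 0).mpr rfl
  rcases Nat.eq_zero_or_pos q with hq | hq
  · refine ⟨1, one_pos, fun y => ?_⟩
    subst hq
    have hy : y = 0 := Subsingleton.elim y 0
    rw [hy, hNzero, norm_zero, mul_zero]
  · haveI : Nonempty (Fin q) := ⟨⟨0, hq⟩⟩
    -- N is Lipschitz hence continuous
    set C : ℝ := ∑ i, N (fun k => if i = k then (1:ℝ) else 0) with hC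
    have hCnn : 0 ≤ C := Finset.sum_nonneg fun i _ => hN0 _
    have hNle : ∀ v : Fin q → ℝ, N v ≤ ∑ i, |v i| * N (fun k => if i = k then (1:ℝ) else 0) := by
      intro v
      calc N v = N (∑ i, v i • fun k => if i = k then (1:ℝ) else 0) := by
            rw [← pi_eq_sum_univ v]
        _ ≤ ∑ i, N (v i • fun k => if i = k then (1:ℝ) else 0) :=
            Finset.le_sum_of_subadditive N hNzero.le hNadd _ _
        _ = ∑ i, |v i| * N (fun k => if i = k then (1:ℝ) else 0) := by
            exact Finset.sum_congr rfl fun i _ => hNsmul _ _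
    have hdistle : ∀ x y : Fin q → ℝ, N (x - y) ≤ C * dist x y := by
      intro x y
      calc N (x - y) ≤ ∑ i, |(x - y) i| * N (fun k => if i = k then (1:ℝ) else 0) := hNle _
        _ ≤ ∑ i, dist x y * N (fun k => if i = k then (1:ℝ) else 0) := by
            apply Finset.sum_le_sum
            intro i _
            apply mul_le_mul_of_nonneg_right _ (hN0 _)
            have := dist_le_pi_dist x y i
            rwa [Real.dist_eq] at this
        _ = C * dist x y := by rw [← Finset.mul_sum, mul_comm]
    have hcont : Continuous N := by
      apply (LipschitzWith.of_dist_le_mul (K := Real.toNNReal C) ?_).continuous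
      intro x y
      have h1 : N x - N y ≤ N (x - y) := by
        have := hNadd y (x - y); simp at this; linarith
      have h2 : N y - N x ≤ N (x - y) := by
        have := hNadd x (y - x)
        have heq : N (y - x) = N (x - y) := by
          rw [← neg_sub x y, ← neg_one_smul ℝ (x - y), hNsmul]; norm_num
        simp at this; linarith
      rw [Real.dist_eq]
      have h3 : |N x - N y| ≤ N (x - y) := abs_sub_le_iff.mpr ⟨h1, h2⟩
      calc |N x - N y| ≤ C * dist x y := le_trans h3 (hdistle x y)
        _ ≤ (Real.toNNReal C : ℝ) * dist x y := by
            apply mul_le_mul_of_nonneg_right _ dist_nonneg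
            exact le_max_left _ _
    -- minimum on the sphere
    have hsph : (Metric.sphere (0 : Fin q → ℝ) 1).Nonempty :=
      NormedSpace.sphere_nonempty.mpr zero_le_one
    obtain ⟨z, hz, hzmin⟩ := (isCompact_sphere (0 : Fin q → ℝ) 1).exists_isMinOn hsph
      hcont.continuousOn
    rw [isMinOn_iff] at hzmin
    have hznorm : ‖z‖ = 1 := by simpa using hz
    have hzne : z ≠ 0 := by intro h; rw [h] at hznorm; simp at hznorm
    have hcpos : 0 < N z := lt_of_le_of_ne (hN0 z) fun h => hzne ((hNeq z).mp h.symm)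
    refine ⟨N z, hcpos, fun y => ?_⟩
    rcases eq_or_ne y 0 with rfl | hy
    · simp [hNzero]
    · have hyn : (0:ℝ) < ‖y‖ := norm_pos_iff.mpr hy
      have hw : (‖y‖⁻¹ • y) ∈ Metric.sphere (0 : Fin q → ℝ) 1 := by
        simp [norm_smul, abs_of_pos (inv_pos.mpr hyn), inv_mul_cancel₀ (ne_of_gt hyn)]
      have := hzmin _ hw
      rw [hNsmul] at this
      rw [abs_of_pos (inv_pos.mpr hyn)] at this
      calc N z * ‖y‖ ≤ ‖y‖⁻¹ * N y * ‖y‖ := mul_le_mul_of_nonneg_right this hyn.le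
        _ = N y := by field_simp

theorem dual_bddAbove (b : Fin q → ℝ) :
    BddAbove {r : ℝ | ∃ y : Fin q → ℝ, N y ≤ 1 ∧ r = ∑ i, b i * y i} := by
  obtain ⟨c, hc, hcy⟩ := norm_comparison N hN0 hNeq hNsmul hNadd
  refine ⟨(∑ i, |b i|) * c⁻¹, fun x hx => ?_⟩
  obtain ⟨y, hy1, rfl⟩ := hx
  have hyn : ‖y‖ ≤ c⁻¹ := by
    have h1 : c * ‖y‖ ≤ 1 := (hcy y).trans hy1
    calc ‖y‖ = c⁻¹ * (c * ‖y‖) := by field_simp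
      _ ≤ c⁻¹ * 1 := mul_le_mul_of_nonneg_left h1 (inv_pos.mpr hc).le
      _ = c⁻¹ := mul_one _
  calc ∑ i, b i * y i ≤ ∑ i, |b i| * c⁻¹ := by
        apply Finset.sum_le_sum
        intro i _
        refine le_trans (le_abs_self _) ?_
        rw [abs_mul]
        refine mul_le_mul_of_nonneg_left (le_trans ?_ hyn) (abs_nonneg _)
        rw [← Real.norm_eq_abs]
        exact norm_le_pi_norm y i
    _ = (∑ i, |b i|) * c⁻¹ := (Finset.sum_mul _ _ _).symm

theorem dualNorm_nonneg' (b : Fin q → ℝ) : 0 ≤ dualNorm N b := by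
  apply le_csSup (dual_bddAbove N hN0 hNeq hNsmul hNadd b)
  exact ⟨0, by rw [(hNeq 0).mpr rfl]; norm_num, by simp⟩

theorem pairing_le_aux (b v : Fin q → ℝ) : ∑ i, v i * b i ≤ N v * dualNorm N b := by
  rcases eq_or_ne v 0 with rfl | hv
  · simp [(hNeq 0).mpr rfl]
  · have hNv : 0 < N v := lt_of_le_of_ne (hN0 v) fun h => hv ((hNeq v).mp h.symm)
    have hy1 : N ((N v)⁻¹ • v) ≤ 1 := by
      rw [hNsmul, abs_of_pos (inv_pos.mpr hNv), inv_mul_cancel₀ (ne_of_gt hNv)]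
    have hmem : ∑ i, b i * ((N v)⁻¹ • v) i ∈
        {r : ℝ | ∃ y : Fin q → ℝ, N y ≤ 1 ∧ r = ∑ i, b i * y i} := ⟨_, hy1, rfl⟩
    have hle : ∑ i, b i * ((N v)⁻¹ • v) i ≤ dualNorm N b :=
      le_csSup (dual_bddAbove N hN0 hNeq hNsmul hNadd b) hmem
    have heq : ∑ i, v i * b i = N v * ∑ i, b i * ((N v)⁻¹ • v) i := by
      rw [Finset.mul_sum]
      apply Finset.sum_congr rfl
      intro i _
      simp only [Pi.smul_apply, smul_eq_mul]
      field_simp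
    rw [heq]
    exact mul_le_mul_of_nonneg_left hle hNv.le

theorem pairing_le (b v : Fin q → ℝ) : |∑ i, v i * b i| ≤ N v * dualNorm N b := by
  rw [abs_le]
  constructor
  · have h := pairing_le_aux N hN0 hNeq hNsmul hNadd b (-v)
    have h2 : N (-v) = N v := by
      rw [← neg_one_smul ℝ v, hNsmul]; norm_num
    have h3 : ∑ i, (-v) i * b i = -∑ i, v i * b i := by
      rw [← Finset.sum_neg_distrib]
      exact Finset.sum_congr rfl fun i _ => by simp
    rw [h2, h3] at h
    linarith
  · exact pairing_le_aux N hN0 hNeq hNsmul hNadd b v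

end NormLemmas

theorem ereal_eq_top_of_forall_coe_le (a : EReal) (h : ∀ x : ℝ, (x : EReal) ≤ a) : a = ⊤ := by
  induction a using EReal.rec with
  | bot => simpa using h 0
  | coe x =>
    have := h (x + 1)
    rw [EReal.coe_le_coe_iff] at this
    linarith
  | top => rfl

/-- Lemma 1 of the paper (equality case, unconstrained supports): for convex continuous
`L : ℝʳ → ℝ` with bounded conjugate domain `Θ`, norm `N` on `ℝ^q`, `λ > 0`, `b ∈ ℝ^q`,
`ζ̂₁,…,ζ̂ᵣ ∈ ℝ^q`:
`sup_ζ L(⟨ζ₁,b⟩,…,⟨ζᵣ,b⟩) − λ Σⱼ‖ζⱼ − ζ̂ⱼ‖ = L(⟨ζ̂₁,b⟩,…,⟨ζ̂ᵣ,b⟩)` if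
`sup_{θ∈Θ}‖θ‖_∞ · ‖b‖_* ≤ λ`, and `+∞` otherwise. -/
theorem robust_regularization_lemma_eq (r q : ℕ) (N : (Fin q → ℝ) → ℝ)
    (hN0 : ∀ x, 0 ≤ N x) (hNeq : ∀ x, N x = 0 ↔ x = 0)
    (hNsmul : ∀ (c : ℝ) (x : Fin q → ℝ), N (c • x) = |c| * N x)
    (hNadd : ∀ x y, N (x + y) ≤ N x + N y)
    (L : (Fin r → ℝ) → ℝ) (hLconv : ConvexOn ℝ Set.univ L) (hLcont : Continuous L)
    (hΘbdd : Bornology.IsBounded {θ : Fin r → ℝ | fenchelConj L θ < ⊤})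
    (lam : ℝ) (hlam : 0 < lam) (b : Fin q → ℝ) (zhat : Fin r → Fin q → ℝ) :
    (⨆ z : Fin r → Fin q → ℝ,
        ((L (fun j => ∑ i, z j i * b i) - lam * ∑ j, N (z j - zhat j) : ℝ) : EReal))
      = if sSup ((fun θ : Fin r → ℝ => ⨆ j, |θ j|) ''
            {θ : Fin r → ℝ | fenchelConj L θ < ⊤}) * dualNorm N b ≤ lam
        then ((L (fun j => ∑ i, zhat j i * b i) : ℝ) : EReal) else ⊤ := by
  classical
  have hNzero : N 0 = 0 := (hNeq 0).mpr rfl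
  set Θ : Set (Fin r → ℝ) := {θ | fenchelConj L θ < ⊤} with hΘdef
  set S : Set ℝ := (fun θ : Fin r → ℝ => ⨆ j, |θ j|) '' Θ with hSdef
  set κ : ℝ := sSup S with hκdef
  set D : ℝ := dualNorm N b with hDdef
  set shat : Fin r → ℝ := fun j => ∑ i, zhat j i * b i with hshatdef
  have hshatj : ∀ j, shat j = ∑ i, zhat j i * b i := fun j => by rw [hshatdef]
  obtain ⟨θ₀, hθ₀⟩ := exists_subgradient L hLconv hLcont 0
  have hθ₀Θ : θ₀ ∈ Θ := subgrad_mem_dom L θ₀ 0 hθ₀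
  have hΘne : Θ.Nonempty := ⟨θ₀, hθ₀Θ⟩
  have hSne : S.Nonempty := hΘne.image _
  obtain ⟨R, hR⟩ := isBounded_iff_forall_norm_le.mp hΘbdd
  have hRnn : 0 ≤ R := le_trans (norm_nonneg θ₀) (hR θ₀ hθ₀Θ)
  have hSbdd : BddAbove S := by
    refine ⟨R, fun m hm => ?_⟩
    obtain ⟨θ, hθ, rfl⟩ := hm
    refine Real.iSup_le (fun j => ?_) hRnn
    calc |θ j| = ‖θ j‖ := (Real.norm_eq_abs _).symm
      _ ≤ ‖θ‖ := norm_le_pi_norm θ j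
      _ ≤ R := hR θ hθ
  have hκmem : ∀ θ ∈ Θ, ∀ j, |θ j| ≤ κ := fun θ hθ j =>
    le_trans (le_ciSup (Set.finite_range fun j => |θ j|).bddAbove j)
      (le_csSup hSbdd ⟨θ, hθ, rfl⟩)
  have hDnn : 0 ≤ D := dualNorm_nonneg' N hN0 hNeq hNsmul hNadd b
  have hκnn : 0 ≤ κ :=
    le_trans (Real.iSup_nonneg fun j => abs_nonneg (θ₀ j)) (le_csSup hSbdd ⟨θ₀, hθ₀Θ, rfl⟩)
  by_cases hcase : κ * D ≤ lam
  · rw [if_pos hcase]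
    apply le_antisymm
    · apply iSup_le
      intro z
      rw [EReal.coe_le_coe_iff]
      set sz : Fin r → ℝ := fun j => ∑ i, z j i * b i with hszdef
      have hszj : ∀ j, sz j = ∑ i, z j i * b i := fun j => by rw [hszdef]
      obtain ⟨θ, hθsub⟩ := exists_subgradient L hLconv hLcont sz
      have hθΘ : θ ∈ Θ := subgrad_mem_dom L θ sz hθsub
      have h1 : L sz ≤ L shat + ∑ j, θ j * (sz j - shat j) := by
        have h := hθsub shat
        have heq : ∑ j, θ j * (shat j - sz j) = -∑ j, θ j * (sz j - shat j) := by
          rw [← Finset.sum_neg_distrib]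
          exact Finset.sum_congr rfl fun j _ => by ring
        rw [heq] at h
        linarith
      have h2 : ∀ j, θ j * (sz j - shat j) ≤ κ * D * N (z j - zhat j) := by
        intro j
        have e1 : sz j - shat j = ∑ i, (z j - zhat j) i * b i := by
          rw [hszj, hshatj, ← Finset.sum_sub_distrib]
          exact Finset.sum_congr rfl fun i _ => by simp [Pi.sub_apply]; ring
        calc θ j * (sz j - shat j) ≤ |θ j * (sz j - shat j)| := le_abs_self _
          _ = |θ j| * |sz j - shat j| := abs_mul _ _
          _ ≤ κ * (N (z j - zhat j) * D) := by
              apply mul_le_mul (hκmem θ hθΘ j) _ (abs_nonneg _) hκnn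
              rw [e1]
              exact pairing_le N hN0 hNeq hNsmul hNadd b (z j - zhat j)
          _ = κ * D * N (z j - zhat j) := by ring
      have h3 : ∑ j, θ j * (sz j - shat j) ≤ κ * D * ∑ j, N (z j - zhat j) := by
        rw [Finset.mul_sum]
        exact Finset.sum_le_sum fun j _ => h2 j
      have h4 : κ * D * ∑ j, N (z j - zhat j) ≤ lam * ∑ j, N (z j - zhat j) :=
        mul_le_mul_of_nonneg_right hcase (Finset.sum_nonneg fun j _ => hN0 _)
      linarith
    · have hz0 : (∑ j, N (zhat j - zhat j)) = 0 :=
        Finset.sum_eq_zero fun j _ => by rw [sub_self]; exact hNzero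
      have heq : ((L shat : ℝ) : EReal)
          = ((L shat - lam * ∑ j, N (zhat j - zhat j) : ℝ) : EReal) := by
        rw [hz0, mul_zero, sub_zero]
      rw [heq]
      exact le_iSup (fun z : Fin r → Fin q → ℝ =>
        ((L (fun j => ∑ i, z j i * b i) - lam * ∑ j, N (z j - zhat j) : ℝ) : EReal)) zhat
  · rw [if_neg hcase]
    push_neg at hcase
    have hDpos : 0 < D := by
      rcases hDnn.lt_or_eq with h | h
      · exact h
      · exfalso; rw [← h, mul_zero] at hcase; linarith
    have h1 : lam / D < κ := by rw [div_lt_iff₀ hDpos]; linarith [mul_comm κ D]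
    obtain ⟨m, hmS, hm⟩ := exists_lt_of_lt_csSup hSne h1
    obtain ⟨θ, hθΘ, rfl⟩ := hmS
    have hm' : lam / D < ⨆ j, |θ j| := hm
    have hmpos : 0 < ⨆ j, |θ j| := lt_trans (div_pos hlam hDpos) hm'
    rcases Nat.eq_zero_or_pos r with hrz | hr
    · exfalso
      subst hrz
      rw [show (⨆ j : Fin 0, |θ j|) = 0 from by simp [Real.iSup_of_isEmpty]] at hmpos
      exact lt_irrefl 0 hmpos
    haveI : Nonempty (Fin r) := ⟨⟨0, hr⟩⟩
    obtain ⟨j₀, hj₀⟩ := Finite.exists_max fun j => |θ j|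
    have hsup_eq : (⨆ j, |θ j|) = |θ j₀| :=
      le_antisymm (Real.iSup_le (fun j => hj₀ j) (abs_nonneg _))
        (le_ciSup (Set.finite_range fun j => |θ j|).bddAbove j₀)
    rw [hsup_eq] at hm' hmpos
    have h2 : lam / |θ j₀| < D := by
      rw [div_lt_iff₀ hmpos]
      have := (div_lt_iff₀ hDpos).mp hm'
      linarith [mul_comm D (|θ j₀|)]
    have hTne : {x : ℝ | ∃ y : Fin q → ℝ, N y ≤ 1 ∧ x = ∑ i, b i * y i}.Nonempty :=
      ⟨0, 0, by rw [hNzero]; norm_num, by simp⟩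
    have h2' : lam / |θ j₀| < sSup {x : ℝ | ∃ y : Fin q → ℝ, N y ≤ 1 ∧ x = ∑ i, b i * y i} := h2
    obtain ⟨w, hwS, hw⟩ := exists_lt_of_lt_csSup hTne h2'
    obtain ⟨y, hy1, rfl⟩ := hwS
    obtain ⟨M, hM⟩ := dom_bound L θ hθΘ
    set σ : ℝ := if 0 ≤ θ j₀ then 1 else -1 with hσdef
    have hσθ : σ * θ j₀ = |θ j₀| := by
      rcases le_or_gt 0 (θ j₀) with h | h
      · rw [hσdef, if_pos h, one_mul, abs_of_nonneg h]
      · rw [hσdef, if_neg (not_le.mpr h), neg_one_mul, abs_of_neg h]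
    have hσabs : |σ| = 1 := by rw [hσdef]; split_ifs <;> norm_num
    set P : ℝ := ∑ i, b i * y i with hPdef
    have hP' : ∑ i, y i * b i = P := Finset.sum_congr rfl fun i _ => mul_comm _ _
    have hδ : 0 < |θ j₀| * P - lam := by
      have := (div_lt_iff₀ hmpos).mp hw
      nlinarith
    apply ereal_eq_top_of_forall_coe_le
    intro x
    set C₀ : ℝ := ∑ j, θ j * shat j - M with hC₀def
    set δ : ℝ := |θ j₀| * P - lam with hδdef
    set t : ℝ := max 0 ((x - C₀) / δ) with htdef
    have ht0 : 0 ≤ t := le_max_left _ _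
    have htx : x ≤ C₀ + t * δ := by
      have h3 : (x - C₀) / δ ≤ t := le_max_right _ _
      have h4 := (div_le_iff₀ hδ).mp h3
      linarith
    set z : Fin r → Fin q → ℝ := fun j => zhat j + (if j = j₀ then t * σ else 0) • y
      with hzdef
    have hsz : ∀ j, ∑ i, z j i * b i = shat j + (if j = j₀ then t * σ else 0) * P := by
      intro j
      calc ∑ i, z j i * b i
          = ∑ i, (zhat j i * b i + (if j = j₀ then t * σ else 0) * (y i * b i)) := by
            apply Finset.sum_congr rfl
            intro i _
            simp only [hzdef, Pi.add_apply, Pi.smul_apply, smul_eq_mul]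
            ring
        _ = shat j + (if j = j₀ then t * σ else 0) * P := by
            rw [Finset.sum_add_distrib, ← Finset.mul_sum, hP', hshatj]
    have hpen : ∑ j, N (z j - zhat j) ≤ t := by
      have hterm : ∀ j, N (z j - zhat j) = (if j = j₀ then t * N y else 0) := by
        intro j
        have hzz : z j - zhat j = (if j = j₀ then t * σ else 0) • y := by
          rw [hzdef]; exact add_sub_cancel_left _ _
        rw [hzz, hNsmul]
        split_ifs with h
        · rw [abs_mul, hσabs, mul_one, abs_of_nonneg ht0]
        · simp [hNzero]
      calc ∑ j, N (z j - zhat j) = ∑ j, (if j = j₀ then t * N y else 0) :=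
            Finset.sum_congr rfl fun j _ => hterm j
        _ = t * N y := by simp
        _ ≤ t * 1 := mul_le_mul_of_nonneg_left hy1 ht0
        _ = t := mul_one t
    have hsum : ∑ j, θ j * (∑ i, z j i * b i) = ∑ j, θ j * shat j + t * (|θ j₀| * P) := by
      calc ∑ j, θ j * (∑ i, z j i * b i)
          = ∑ j, (θ j * shat j + (if j = j₀ then θ j₀ * (t * σ) * P else 0)) := by
            apply Finset.sum_congr rfl
            intro j _
            rw [hsz j]
            split_ifs with h
            · subst h; ring
            · ring
        _ = ∑ j, θ j * shat j + θ j₀ * (t * σ) * P := by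
            rw [Finset.sum_add_distrib]
            congr 1
            simp
        _ = ∑ j, θ j * shat j + t * (|θ j₀| * P) := by
            rw [← hσθ]; ring
    have hLlow : ∑ j, θ j * (∑ i, z j i * b i) - M ≤ L (fun j => ∑ i, z j i * b i) := by
      have := hM (fun j => ∑ i, z j i * b i)
      linarith
    have hpenlam : lam * ∑ j, N (z j - zhat j) ≤ lam * t :=
      mul_le_mul_of_nonneg_left hpen hlam.le
    have hfinal : x ≤ L (fun j => ∑ i, z j i * b i) - lam * ∑ j, N (z j - zhat j) := by
      have hv : C₀ + t * δ ≤ L (fun j => ∑ i, z j i * b i) - lam * ∑ j, N (z j - zhat j) := by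
        rw [hC₀def, hδdef]
        have := hsum
        linarith
      linarith
    exact le_trans (EReal.coe_le_coe_iff.mpr hfinal) (le_iSup (fun z : Fin r → Fin q → ℝ =>
      ((L (fun j => ∑ i, z j i * b i) - lam * ∑ j, N (z j - zhat j) : ℝ) : EReal)) z)
end

section
/- Let L : ℝʳ → ℝ be convex and continuous with bounded conjugate effective domain, let Ωⱼ ⊆ ℝ^q for j = 1,…,r with ζ̂ⱼ ∈ Ωⱼ, λ > 0 and b ∈ ℝ^q. If sup_{θ ∈ Θ} ‖θ‖_∞ · ‖b‖_* ≤ λ where Θ = {θ : L*(θ) < ∞}, then sup over ζⱼ ∈ Ωⱼ of L(⟨ζ₁,b⟩,…,⟨ζᵣ,b⟩) − λ·Σⱼ‖ζⱼ − ζ̂ⱼ‖ ≤ L(⟨ζ̂₁,b⟩,…,⟨ζ̂ᵣ,b⟩). -/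
open scoped BigOperators

/-- Every vector is the sum of its coordinates times basis vectors. -/
lemma rr_rep {n : ℕ} (s : Fin n → ℝ) : s = ∑ j, s j • (Pi.single j 1 : Fin n → ℝ) := by
  have h := Finset.univ_sum_single s
  rw [← h]
  refine Finset.sum_congr rfl fun j _ => ?_
  funext k
  by_cases hk : k = j <;> simp [Pi.single_apply, hk]

/-- Existence of a subgradient for a convex continuous function on `ℝʳ`. -/
lemma rr_exists_subgradient {r : ℕ} (L : (Fin r → ℝ) → ℝ)
    (hLconv : ConvexOn ℝ Set.univ L) (hLcont : Continuous L) (s₀ : Fin r → ℝ) :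
    ∃ θ : Fin r → ℝ, ∀ s, (∑ j, θ j * s j) - L s ≤ (∑ j, θ j * s₀ j) - L s₀ := by
  set E : Set ((Fin r → ℝ) × ℝ) := {p | L p.1 < p.2} with hEdef
  have hEopen : IsOpen E := isOpen_lt (hLcont.comp continuous_fst) continuous_snd
  have hEconv : Convex ℝ E := by
    rintro ⟨x, t⟩ hx ⟨y, u⟩ hy a c ha hc hac
    simp only [hEdef, Set.mem_setOf_eq] at hx hy ⊢
    have hL := hLconv.2 (Set.mem_univ x) (Set.mem_univ y) ha hc hac
    simp only [smul_eq_mul] at hL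
    have hkey : 0 < a * (t - L x) + c * (u - L y) := by
      rcases eq_or_lt_of_le ha with h | h
      · have hc1 : c = 1 := by linarith
        have h1 : 0 < c * (u - L y) := by rw [hc1]; linarith
        nlinarith [mul_nonneg ha (sub_pos.mpr hx).le]
      · have h1 : 0 < a * (t - L x) := mul_pos h (by linarith)
        nlinarith [mul_nonneg hc (sub_pos.mpr hy).le]
    have : (a • (x, t) + c • (y, u) : (Fin r → ℝ) × ℝ) = (a • x + c • y, a * t + c * u) := rfl
    rw [this]
    show L (a • x + c • y) < a * t + c * u
    nlinarith
  have hx₀ : ((s₀, L s₀) : (Fin r → ℝ) × ℝ) ∉ E := by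
    simp [hEdef]
  obtain ⟨f, hf⟩ := geometric_hahn_banach_open_point hEconv hEopen hx₀
  set a : ℝ := f (0, 1) with hadef
  set g : (Fin r → ℝ) →L[ℝ] ℝ := f.comp (ContinuousLinearMap.inl ℝ (Fin r → ℝ) ℝ) with hgdef
  have hdecomp : ∀ (s : Fin r → ℝ) (t : ℝ), f (s, t) = g s + t * a := by
    intro s t
    have h1 : ((s, t) : (Fin r → ℝ) × ℝ) = (s, 0) + t • ((0 : Fin r → ℝ), (1 : ℝ)) := by
      simp [Prod.ext_iff]
    rw [h1, map_add, map_smul]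
    simp [hgdef, hadef, smul_eq_mul]
  have hfx₀ : f (s₀, L s₀) = g s₀ + L s₀ * a := hdecomp _ _
  have hane : a < 0 := by
    have h1 := hf (s₀, L s₀ + 1) (by simp [hEdef])
    rw [hdecomp, hfx₀] at h1
    linarith
  have hkey : ∀ s, g s + L s * a ≤ g s₀ + L s₀ * a := by
    intro s
    by_contra hcon
    push_neg at hcon
    set ε := (g s + L s * a - (g s₀ + L s₀ * a)) / (-a) with hε
    have hεpos : 0 < ε := div_pos (by linarith) (by linarith)
    have h2 := hf (s, L s + ε) (by simp [hEdef]; linarith)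
    rw [hdecomp, hfx₀] at h2
    have h3 : ε * (-a) = g s + L s * a - (g s₀ + L s₀ * a) := by
      rw [hε, div_mul_cancel₀ _ (by linarith : (-a) ≠ 0)]
    nlinarith
  have hglin : ∀ s : Fin r → ℝ, g s = ∑ j, s j * g (Pi.single j 1) := by
    intro s
    conv_lhs => rw [rr_rep s]
    rw [map_sum]
    refine Finset.sum_congr rfl fun j _ => ?_
    rw [map_smul, smul_eq_mul]
  refine ⟨fun j => g (Pi.single j 1) * (-a)⁻¹, fun s => ?_⟩
  have hθsum : ∀ v : Fin r → ℝ, ∑ j, (g (Pi.single j 1) * (-a)⁻¹) * v j = g v * (-a)⁻¹ := by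
    intro v
    rw [hglin v, Finset.sum_mul]
    refine Finset.sum_congr rfl fun j _ => by ring
  rw [hθsum s, hθsum s₀]
  have hna : (0 : ℝ) < -a := by linarith
  have h5 := mul_le_mul_of_nonneg_right (hkey s) (inv_pos.mpr hna).le
  have ha' : a * (-a)⁻¹ = -1 := by rw [mul_inv_eq_iff_eq_mul₀ (by linarith)]; ring
  rw [add_mul, add_mul, mul_assoc, mul_assoc, ha'] at h5
  linarith

/-- Lemma 1 of the paper, inequality direction with arbitrary support sets `Ωⱼ`:
if `sup_{θ∈Θ}‖θ‖_∞ · ‖b‖_* ≤ λ` then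
`sup_{ζⱼ∈Ωⱼ} L(⟨ζ₁,b⟩,…,⟨ζᵣ,b⟩) − λ Σⱼ‖ζⱼ − ζ̂ⱼ‖ ≤ L(⟨ζ̂₁,b⟩,…,⟨ζ̂ᵣ,b⟩)`. -/
theorem robust_regularization_lemma_le (r q : ℕ) (N : (Fin q → ℝ) → ℝ)
    (hN0 : ∀ x, 0 ≤ N x) (hNeq : ∀ x, N x = 0 ↔ x = 0)
    (hNsmul : ∀ (c : ℝ) (x : Fin q → ℝ), N (c • x) = |c| * N x)
    (hNadd : ∀ x y, N (x + y) ≤ N x + N y)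
    (L : (Fin r → ℝ) → ℝ) (hLconv : ConvexOn ℝ Set.univ L) (hLcont : Continuous L)
    (hΘbdd : Bornology.IsBounded {θ : Fin r → ℝ | fenchelConj L θ < ⊤})
    (Ω : Fin r → Set (Fin q → ℝ)) (zhat : Fin r → Fin q → ℝ)
    (hmem : ∀ j, zhat j ∈ Ω j)
    (lam : ℝ) (hlam : 0 < lam) (b : Fin q → ℝ)
    (hcond : sSup ((fun θ : Fin r → ℝ => ⨆ j, |θ j|) ''
        {θ : Fin r → ℝ | fenchelConj L θ < ⊤}) * dualNorm N b ≤ lam) :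
    (⨆ z : {z : Fin r → Fin q → ℝ // ∀ j, z j ∈ Ω j},
        ((L (fun j => ∑ i, z.1 j i * b i) - lam * ∑ j, N (z.1 j - zhat j) : ℝ) : EReal))
      ≤ ((L (fun j => ∑ i, zhat j i * b i) : ℝ) : EReal) := by
  have hN0' : N 0 = 0 := (hNeq 0).mpr rfl
  -- Step 1: the `N`-unit ball is bounded (norm equivalence).
  obtain ⟨R, hR0, hRball⟩ : ∃ R : ℝ, 0 ≤ R ∧ ∀ y : Fin q → ℝ, N y ≤ 1 → ‖y‖ ≤ R := by
    by_cases hq : Nonempty (Fin q)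
    · -- N is continuous
      set C : ℝ := ∑ i, N (Pi.single i 1) with hCdef
      have hC0 : 0 ≤ C := Finset.sum_nonneg fun i _ => hN0 _
      have hsub : ∀ v : Fin q → ℝ, N v ≤ C * ‖v‖ := by
        intro v
        have h1 : N v ≤ ∑ i, |v i| * N (Pi.single i 1) := by
          calc N v = N (∑ i, v i • (Pi.single i 1 : Fin q → ℝ)) := by rw [← rr_rep]
          _ ≤ ∑ i, N (v i • (Pi.single i 1 : Fin q → ℝ)) :=
              Finset.le_sum_of_subadditive N hN0'.le hNadd _ _
          _ = ∑ i, |v i| * N (Pi.single i 1) := by simp [hNsmul]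
        calc N v ≤ ∑ i, |v i| * N (Pi.single i 1) := h1
        _ ≤ ∑ i, ‖v‖ * N (Pi.single i 1) := by
            refine Finset.sum_le_sum fun i _ => mul_le_mul_of_nonneg_right ?_ (hN0 _)
            calc |v i| = ‖v i‖ := (Real.norm_eq_abs _).symm
            _ ≤ ‖v‖ := norm_le_pi_norm v i
        _ = C * ‖v‖ := by rw [← Finset.mul_sum]; ring
      have hcont : Continuous N := by
        have hlip : LipschitzWith (Real.toNNReal C) N := by
          refine LipschitzWith.of_dist_le_mul fun x y => ?_
          rw [Real.dist_eq, dist_eq_norm, Real.coe_toNNReal C hC0]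
          have h1 : N x ≤ N y + N (x - y) := by
            have := hNadd y (x - y); simpa using this
          have h3 : N (y - x) = N (x - y) := by
            have : y - x = (-1 : ℝ) • (x - y) := by simp
            rw [this, hNsmul]; simp
          have h2 : N y ≤ N x + N (x - y) := by
            have := hNadd x (y - x); rw [h3] at this; simpa using this
          have h4 := hsub (x - y)
          rw [abs_le]; constructor <;> linarith
        exact hlip.continuous
      haveI : Nonempty (Fin q) := hq
      haveI : Nontrivial (Fin q → ℝ) := Function.nontrivial
      have hsph : (Metric.sphere (0 : Fin q → ℝ) 1).Nonempty :=
        NormedSpace.sphere_nonempty.mpr zero_le_one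
      obtain ⟨y₀, hy₀, hmin⟩ :=
        (isCompact_sphere (0 : Fin q → ℝ) 1).exists_isMinOn hsph hcont.continuousOn
      have hy₀n : ‖y₀‖ = 1 := by simpa using hy₀
      have hy₀ne : y₀ ≠ 0 := by
        intro h; rw [h, norm_zero] at hy₀n; exact one_ne_zero hy₀n.symm
      set m : ℝ := N y₀ with hmdef
      have hm : 0 < m := by
        rcases (hN0 y₀).lt_or_eq with h | h
        · exact h
        · exact absurd ((hNeq y₀).mp h.symm) hy₀ne
      have hlow : ∀ y : Fin q → ℝ, m * ‖y‖ ≤ N y := by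
        intro y
        by_cases hy : y = 0
        · simp [hy, hN0']
        · have hny : 0 < ‖y‖ := norm_pos_iff.mpr hy
          have hmemy : ‖y‖⁻¹ • y ∈ Metric.sphere (0 : Fin q → ℝ) 1 := by
            simp [norm_smul, abs_of_pos (inv_pos.mpr hny), inv_mul_cancel₀ hny.ne']
          have h6 := isMinOn_iff.mp hmin _ hmemy
          rw [hNsmul, abs_inv, abs_of_pos hny] at h6
          calc m * ‖y‖ ≤ (‖y‖⁻¹ * N y) * ‖y‖ := mul_le_mul_of_nonneg_right h6 hny.le
          _ = N y := by field_simp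
      refine ⟨1 / m, by positivity, fun y hy => ?_⟩
      have h7 := hlow y
      rw [le_div_iff₀ hm]
      nlinarith
    · refine ⟨0, le_rfl, fun y _ => ?_⟩
      have : y = 0 := funext fun i => absurd ⟨i⟩ hq
      simp [this]
  -- Step 2: dual norm facts
  set S : Set ℝ := {t : ℝ | ∃ y : Fin q → ℝ, N y ≤ 1 ∧ t = ∑ i, b i * y i} with hSdef
  have hDS : dualNorm N b = sSup S := rfl
  have hSbdd : BddAbove S := by
    refine ⟨(∑ i, |b i|) * R, ?_⟩
    rintro t ⟨y, hy, rfl⟩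
    calc ∑ i, b i * y i ≤ ∑ i, |b i| * R := by
          refine Finset.sum_le_sum fun i _ => ?_
          calc b i * y i ≤ |b i * y i| := le_abs_self _
          _ = |b i| * |y i| := abs_mul _ _
          _ ≤ |b i| * R := by
              refine mul_le_mul_of_nonneg_left ?_ (abs_nonneg _)
              calc |y i| = ‖y i‖ := (Real.norm_eq_abs _).symm
              _ ≤ ‖y‖ := norm_le_pi_norm y i
              _ ≤ R := hRball y hy
    _ = (∑ i, |b i|) * R := by rw [Finset.sum_mul]
  have hS0 : (0 : ℝ) ∈ S := ⟨0, by simp [hN0'], by simp⟩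
  have hD0 : 0 ≤ dualNorm N b := by rw [hDS]; exact le_csSup hSbdd hS0
  have hCS : ∀ u : Fin q → ℝ, |∑ i, u i * b i| ≤ N u * dualNorm N b := by
    intro u
    by_cases hu : u = 0
    · simp [hu, hN0']
    · have hNu : 0 < N u := by
        rcases (hN0 u).lt_or_eq with h | h
        · exact h
        · exact absurd ((hNeq u).mp h.symm) hu
      have hbound : ∀ c : ℝ, |c| = (N u)⁻¹ → c * ∑ i, u i * b i ≤ dualNorm N b := by
        intro c hc
        have h1 : (∑ i, b i * (c • u) i) ∈ S := by
          refine ⟨c • u, ?_, rfl⟩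
          rw [hNsmul, hc, inv_mul_cancel₀ hNu.ne']
        have h2 := le_csSup hSbdd h1
        rw [hDS]
        calc c * ∑ i, u i * b i = ∑ i, b i * (c • u) i := by
              rw [Finset.mul_sum]
              refine Finset.sum_congr rfl fun i _ => ?_
              simp [smul_eq_mul]; ring
        _ ≤ sSup S := h2
      have hpos : ((N u)⁻¹ : ℝ) * ∑ i, u i * b i ≤ dualNorm N b :=
        hbound _ (abs_of_pos (inv_pos.mpr hNu))
      have hneg : (-(N u)⁻¹ : ℝ) * ∑ i, u i * b i ≤ dualNorm N b :=
        hbound _ (by rw [abs_neg]; exact abs_of_pos (inv_pos.mpr hNu))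
      rw [abs_le]
      constructor
      · have := mul_le_mul_of_nonneg_left hneg hNu.le
        rw [← mul_assoc] at this
        have h8 : N u * -(N u)⁻¹ = -1 := by field_simp
        rw [h8] at this; linarith
      · have := mul_le_mul_of_nonneg_left hpos hNu.le
        rw [← mul_assoc, mul_inv_cancel₀ hNu.ne', one_mul] at this
        exact this
  -- Step 3: the sup-norm bound over Θ
  set Θ : Set (Fin r → ℝ) := {θ : Fin r → ℝ | fenchelConj L θ < ⊤} with hΘdef
  set M : ℝ := sSup ((fun θ : Fin r → ℝ => ⨆ j, |θ j|) '' Θ) with hMdef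
  obtain ⟨R₂, hR₂⟩ := hΘbdd.exists_norm_le
  have hMbdd : BddAbove ((fun θ : Fin r → ℝ => ⨆ j, |θ j|) '' Θ) := by
    refine ⟨max R₂ 0, ?_⟩
    rintro t ⟨θ, hθ, rfl⟩
    refine Real.iSup_le (fun j => ?_) (le_max_right _ _)
    calc |θ j| = ‖θ j‖ := (Real.norm_eq_abs _).symm
    _ ≤ ‖θ‖ := norm_le_pi_norm θ j
    _ ≤ R₂ := hR₂ θ hθ
    _ ≤ max R₂ 0 := le_max_left _ _
  -- Step 4: main argument
  refine iSup_le ?_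
  rintro ⟨z, hz⟩
  rw [EReal.coe_le_coe_iff]
  obtain ⟨θ, hθ⟩ := rr_exists_subgradient L hLconv hLcont (fun j => ∑ i, z j i * b i)
  have hθΘ : θ ∈ Θ := by
    show fenchelConj L θ < ⊤
    calc fenchelConj L θ
        ≤ (((∑ j, θ j * ∑ i, z j i * b i) - L (fun j => ∑ i, z j i * b i) : ℝ) : EReal) :=
          iSup_le fun s => EReal.coe_le_coe_iff.mpr (hθ s)
    _ < ⊤ := EReal.coe_lt_top _
  have hθM : ∀ j, |θ j| ≤ M := by
    intro j
    calc |θ j| ≤ ⨆ j', |θ j'| := le_ciSup (f := fun j' => |θ j'|) (Set.Finite.bddAbove (Set.finite_range _)) j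
    _ ≤ M := le_csSup hMbdd ⟨θ, hθΘ, rfl⟩
  have hsubg := hθ (fun j => ∑ i, zhat j i * b i)
  have hterm : ∀ j, θ j * ((∑ i, z j i * b i) - ∑ i, zhat j i * b i)
      ≤ lam * N (z j - zhat j) := by
    intro j
    have h1 : (∑ i, z j i * b i) - ∑ i, zhat j i * b i = ∑ i, (z j - zhat j) i * b i := by
      rw [← Finset.sum_sub_distrib]
      refine Finset.sum_congr rfl fun i _ => ?_
      simp [sub_mul]
    have h2 := hCS (z j - zhat j)
    have hM0 : 0 ≤ M := le_trans (abs_nonneg _) (hθM j)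
    calc θ j * ((∑ i, z j i * b i) - ∑ i, zhat j i * b i)
        ≤ |θ j * ((∑ i, z j i * b i) - ∑ i, zhat j i * b i)| := le_abs_self _
    _ = |θ j| * |(∑ i, z j i * b i) - ∑ i, zhat j i * b i| := abs_mul _ _
    _ ≤ M * (N (z j - zhat j) * dualNorm N b) := by
        refine mul_le_mul (hθM j) ?_ (abs_nonneg _) hM0
        rw [h1]; exact h2
    _ = (M * dualNorm N b) * N (z j - zhat j) := by ring
    _ ≤ lam * N (z j - zhat j) := mul_le_mul_of_nonneg_right hcond (hN0 _)
  have hsum : ∑ j, θ j * ((∑ i, z j i * b i) - ∑ i, zhat j i * b i)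
      ≤ lam * ∑ j, N (z j - zhat j) := by
    rw [Finset.mul_sum]
    exact Finset.sum_le_sum fun j _ => hterm j
  have hexp : ∑ j, θ j * ((∑ i, z j i * b i) - ∑ i, zhat j i * b i)
      = (∑ j, θ j * ∑ i, z j i * b i) - ∑ j, θ j * ∑ i, zhat j i * b i := by
    rw [← Finset.sum_sub_distrib]
    exact Finset.sum_congr rfl fun j _ => by ring
  linarith [hsubg, hsum, hexp.symm.le, hexp.le]
end
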